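/- arXiv:1706.08219 — 2 statements merged into one kernel-verified Lean document; each statement's English description precedes it below -/
import Mathlib

section
/- Suppose m items are each assigned independently and uniformly at random to one of g groups, there are n players partitioned into the groups, utilities u_i(j) ∈ [0,1] are independent with E[u_i(j)] ≥ μ_min > 0, and utilities are additive. For α ∈ [0,1) set δ = (1-α)/(1+α). Then the probability that the random assignment is not α-approximate envy-free is at most 2ng·exp(-δ²·m·μ_min/(3g)). -/
open MeasureTheory ProbabilityTheory Real
open scoped ENNReal

lemma my_exp_twothirds_lt : Real.exp (2/3 : ℝ) < 2 := by
  have h3 : Real.exp (2/3 : ℝ) ^ 3 = Real.exp 2 := by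
    rw [← Real.exp_nat_mul]; norm_num
  have h2 : Real.exp 2 < 8 := by
    have h9 := Real.exp_one_lt_d9
    have hp := Real.exp_pos 1
    calc Real.exp 2 = Real.exp 1 ^ 2 := by rw [← Real.exp_nat_mul]; norm_num
    _ < 8 := by nlinarith
  have : Real.exp (2/3 : ℝ) ^ 3 < 2 ^ 3 := by rw [h3]; norm_num; linarith
  exact lt_of_pow_lt_pow_left₀ 3 (by norm_num) this

lemma my_log_two : (2:ℝ)/3 ≤ Real.log 2 :=
  (Real.le_log_iff_exp_le (by norm_num)).2 my_exp_twothirds_lt.le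

-- log (1+x) ≥ x * log 2 on [0,1]
lemma my_log_lb {x : ℝ} (h0 : 0 ≤ x) (h1 : x ≤ 1) : x * Real.log 2 ≤ Real.log (1 + x) := by
  have hc := strictConcaveOn_log_Ioi.concaveOn.2 (Set.mem_Ioi.2 (by norm_num : (0:ℝ) < 1))
    (Set.mem_Ioi.2 (by norm_num : (0:ℝ) < 2)) (by linarith : (0:ℝ) ≤ 1 - x) h0 (by ring)
  simp only [smul_eq_mul, Real.log_one] at hc
  have he : (1-x) * 1 + x * 2 = 1 + x := by ring
  rw [he] at hc
  linarith

-- (A): x^2/3 ≤ (1+x) log(1+x) - x  on [0,1]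
lemma my_ineqA {x : ℝ} (h0 : 0 ≤ x) (h1 : x ≤ 1) :
    x^2/3 ≤ (1+x) * Real.log (1+x) - x := by
  set f : ℝ → ℝ := fun y => (1+y) * Real.log (1+y) - y - y^2/3 with hf
  have hderiv : ∀ y ∈ Set.Ioo (0:ℝ) 1, HasDerivAt f (Real.log (1+y) - 2*y/3) y := by
    intro y hy
    have h1y : (0:ℝ) < 1 + y := by linarith [hy.1]
    have hl : HasDerivAt (fun z : ℝ => Real.log (1+z)) ((1+y)⁻¹) y := by
      have := (Real.hasDerivAt_log h1y.ne').comp y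
        ((hasDerivAt_id y).const_add 1)
      simpa [Function.comp_def] using this
    have hm : HasDerivAt (fun z : ℝ => (1+z) * Real.log (1+z))
        (1 * Real.log (1+y) + (1+y) * (1+y)⁻¹) y :=
      (((hasDerivAt_id y).const_add 1)).mul hl
    have hq : HasDerivAt (fun z : ℝ => z + z^2/3) (1 + 2*y/3) y := by
      have := ((hasDerivAt_pow 2 y).div_const 3).const_add 0
      have h2 : HasDerivAt (fun z : ℝ => z^2/3) (2*y/3) y := by
        simpa [mul_comm] using (hasDerivAt_pow 2 y).div_const 3
      exact (hasDerivAt_id' y).add h2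
    have hsq : HasDerivAt (fun z : ℝ => z^2/3) (2*y/3) y := by
      simpa [mul_comm] using (hasDerivAt_pow 2 y).div_const 3
    have hd := (hm.sub (hasDerivAt_id y)).sub hsq
    refine hd.congr_deriv ?_
    rw [mul_inv_cancel₀ h1y.ne']; ring
  have hmono : MonotoneOn f (Set.Icc 0 1) := by
    apply monotoneOn_of_deriv_nonneg (convex_Icc 0 1)
    · -- continuity
      apply ContinuousOn.sub
      apply ContinuousOn.sub
      · exact (continuousOn_const.add continuousOn_id).mul
          ((continuousOn_const.add continuousOn_id).log
            (fun y hy => by have := hy.1; simp at this ⊢; nlinarith [hy.1]))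
      · exact continuousOn_id
      · exact (continuousOn_pow 2).div_const 3
    · intro y hy
      rw [interior_Icc] at hy
      exact ((hderiv y hy).differentiableAt).differentiableWithinAt
    · intro y hy
      rw [interior_Icc] at hy
      rw [(hderiv y hy).deriv]
      have := my_log_lb hy.1.le hy.2.le
      have := my_log_two
      nlinarith [hy.1.le]
  have := hmono (Set.mem_Icc.2 ⟨le_refl 0, by norm_num⟩) (Set.mem_Icc.2 ⟨h0, h1⟩) h0
  simp only [hf] at this
  simp at this
  linarith

-- (B): x^2/3 ≤ (1-x) log(1-x) + x  on [0,1)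
lemma my_ineqB {x : ℝ} (h0 : 0 ≤ x) (h1 : x < 1) :
    x^2/3 ≤ (1-x) * Real.log (1-x) + x := by
  set f : ℝ → ℝ := fun y => (1-y) * Real.log (1-y) + y - y^2/3 with hf
  have hderiv : ∀ y ∈ Set.Ioo (0:ℝ) 1, HasDerivAt f (-Real.log (1-y) - 2*y/3) y := by
    intro y hy
    have h1y : (0:ℝ) < 1 - y := by linarith [hy.2]
    have hl : HasDerivAt (fun z : ℝ => Real.log (1-z)) (-(1-y)⁻¹) y := by
      have hin : HasDerivAt (fun z : ℝ => 1 - z) (-1) y := by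
        simpa using (hasDerivAt_id y).const_sub 1
      have := (Real.hasDerivAt_log h1y.ne').comp y hin
      simpa [Function.comp_def] using this
    have hm : HasDerivAt (fun z : ℝ => (1-z) * Real.log (1-z))
        ((-1) * Real.log (1-y) + (1-y) * (-(1-y)⁻¹)) y := by
      have hin : HasDerivAt (fun z : ℝ => 1 - z) (-1) y := by
        simpa using (hasDerivAt_id y).const_sub 1
      exact hin.mul hl
    have hq : HasDerivAt (fun z : ℝ => z - z^2/3) (1 - 2*y/3) y := by
      have h2 : HasDerivAt (fun z : ℝ => z^2/3) (2*y/3) y := by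
        simpa [mul_comm] using (hasDerivAt_pow 2 y).div_const 3
      exact (hasDerivAt_id' y).sub h2
    have hsq : HasDerivAt (fun z : ℝ => z^2/3) (2*y/3) y := by
      simpa [mul_comm] using (hasDerivAt_pow 2 y).div_const 3
    have hd := (hm.add (hasDerivAt_id y)).sub hsq
    refine hd.congr_deriv ?_
    rw [mul_neg, mul_inv_cancel₀ h1y.ne']
    ring
  have hmono : MonotoneOn f (Set.Ico 0 1) := by
    apply monotoneOn_of_deriv_nonneg (convex_Ico 0 1)
    · apply ContinuousOn.sub
      apply ContinuousOn.add
      · exact (continuousOn_const.sub continuousOn_id).mul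
          ((continuousOn_const.sub continuousOn_id).log
            (fun y hy => by simp at hy ⊢; nlinarith [hy.2]))
      · exact continuousOn_id
      · exact (continuousOn_pow 2).div_const 3
    · intro y hy
      rw [interior_Ico] at hy
      exact ((hderiv y hy).differentiableAt).differentiableWithinAt
    · intro y hy
      rw [interior_Ico] at hy
      rw [(hderiv y hy).deriv]
      have hlog : Real.log (1-y) ≤ (1-y) - 1 :=
        Real.log_le_sub_one_of_pos (by linarith [hy.2])
      nlinarith [hy.1.le]
  have := hmono (Set.mem_Ico.2 ⟨le_refl 0, by norm_num⟩) (Set.mem_Ico.2 ⟨h0, h1⟩) h0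
  simp only [hf] at this
  simp at this
  linarith

-- exp(t x) ≤ 1 + x (e^t - 1) for x ∈ [0,1]
lemma my_exp_mul_le {t x : ℝ} (h0 : 0 ≤ x) (h1 : x ≤ 1) :
    Real.exp (t * x) ≤ 1 + x * (Real.exp t - 1) := by
  have hc := convexOn_exp.2 (Set.mem_univ (0:ℝ)) (Set.mem_univ t)
    (by linarith : (0:ℝ) ≤ 1 - x) h0 (by ring)
  simp only [smul_eq_mul, mul_zero, Real.exp_zero] at hc
  rw [zero_add, mul_comm x t] at hc
  nlinarith [hc]

-- single-variable mgf bound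
lemma my_mgf_le {Ω : Type*} [MeasureSpace Ω] [IsProbabilityMeasure (ℙ : Measure Ω)]
    (X : Ω → ℝ) (hX : Measurable X) (h01 : ∀ ω, X ω ∈ Set.Icc (0:ℝ) 1) (t : ℝ) :
    mgf X ℙ t ≤ Real.exp ((Real.exp t - 1) * ∫ ω, X ω) := by
  have hXint : Integrable X ℙ := by
    refine Integrable.mono' (integrable_const 1) hX.aestronglyMeasurable ?_
    exact ae_of_all _ (fun ω => by
      rw [Real.norm_eq_abs, abs_le]; exact ⟨by linarith [(h01 ω).1], (h01 ω).2⟩)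
  have h1 : mgf X ℙ t ≤ ∫ ω, (1 + X ω * (Real.exp t - 1)) := by
    refine integral_mono ?_ ?_ (fun ω => my_exp_mul_le (h01 ω).1 (h01 ω).2)
    · refine Integrable.mono' (integrable_const (Real.exp |t|))
        (hX.const_mul t).exp.aestronglyMeasurable ?_
      refine ae_of_all _ (fun ω => ?_)
      rw [Real.norm_eq_abs, abs_of_pos (Real.exp_pos _)]
      apply Real.exp_le_exp.2
      calc t * X ω ≤ |t * X ω| := le_abs_self _
      _ = |t| * |X ω| := abs_mul _ _
      _ ≤ |t| * 1 := by
          refine mul_le_mul_of_nonneg_left ?_ (abs_nonneg t)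
          rw [abs_le]; exact ⟨by linarith [(h01 ω).1], (h01 ω).2⟩
      _ = |t| := mul_one _
    · exact (integrable_const 1).add (hXint.mul_const _)
  have h2 : ∫ ω, (1 + X ω * (Real.exp t - 1)) ∂(ℙ : Measure Ω)
      = 1 + (∫ ω, X ω) * (Real.exp t - 1) := by
    rw [integral_add (integrable_const 1) (hXint.mul_const _), integral_const,
      integral_mul_const]
    simp
  calc mgf X ℙ t ≤ 1 + (∫ ω, X ω) * (Real.exp t - 1) := by rw [← h2]; exact h1
  _ ≤ Real.exp ((∫ ω, X ω) * (Real.exp t - 1)) := by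
      linarith [Real.add_one_le_exp ((∫ ω, X ω) * (Real.exp t - 1))]
  _ = Real.exp ((Real.exp t - 1) * ∫ ω, X ω) := by rw [mul_comm]

-- mgf of sum bound by induction, using pairwise (one-vs-rest) independence
lemma my_mgf_sum_le {Ω : Type*} [MeasureSpace Ω] [IsProbabilityMeasure (ℙ : Measure Ω)]
    {m : ℕ} (X : Fin m → Ω → ℝ) (hX : ∀ j, Measurable (X j))
    (h01 : ∀ j ω, X j ω ∈ Set.Icc (0:ℝ) 1)
    (hind : ∀ (s : Finset (Fin m)) (j : Fin m), j ∉ s →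
      IndepFun (X j) (fun ω => ∑ k ∈ s, X k ω) ℙ)
    (t : ℝ) (s : Finset (Fin m)) :
    mgf (fun ω => ∑ j ∈ s, X j ω) ℙ t
      ≤ Real.exp ((Real.exp t - 1) * ∑ j ∈ s, ∫ ω, X j ω) := by
  classical
  induction s using Finset.cons_induction with
  | empty =>
      simp [mgf]
  | cons a s ha ih =>
      have hadd : (fun ω => ∑ j ∈ Finset.cons a s ha, X j ω)
          = (X a) + (fun ω => ∑ j ∈ s, X j ω) := by
        funext ω; rw [Finset.sum_cons]; rfl
      have hmeas_sum : Measurable (fun ω => ∑ j ∈ s, X j ω) :=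
        Finset.measurable_sum s (fun j _ => hX j)
      have heq : mgf (fun ω => ∑ j ∈ Finset.cons a s ha, X j ω) ℙ t
          = mgf (X a) ℙ t * mgf (fun ω => ∑ j ∈ s, X j ω) ℙ t := by
        rw [hadd]
        exact (hind s a ha).mgf_add' (hX a).aestronglyMeasurable
          hmeas_sum.aestronglyMeasurable
      rw [heq, Finset.sum_cons]
      calc mgf (X a) ℙ t * mgf (fun ω => ∑ j ∈ s, X j ω) ℙ t
          ≤ Real.exp ((Real.exp t - 1) * ∫ ω, X a ω)
            * Real.exp ((Real.exp t - 1) * ∑ j ∈ s, ∫ ω, X j ω) := by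
            refine mul_le_mul (my_mgf_le (X a) (hX a) (h01 a) t) ih mgf_nonneg
              (Real.exp_pos _).le
      _ = Real.exp ((Real.exp t - 1) * ((∫ ω, X a ω) + ∑ j ∈ s, ∫ ω, X j ω)) := by
            rw [← Real.exp_add]; ring_nf

lemma my_indep_one_rest {Ω : Type*} [MeasureSpace Ω] [IsProbabilityMeasure (ℙ : Measure Ω)]
    {g m n : ℕ}
    (u : Fin n → Fin m → Ω → ℝ)
    (σ : Fin m → Ω → Fin g)
    (hindep : iIndepFun
      (m := fun x : (Fin n × Fin m) ⊕ Fin m =>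
        Sum.rec (motive := fun x => MeasurableSpace (Sum.elim (fun _ => ℝ) (fun _ => Fin g) x))
          (fun _ => Real.measurableSpace) (fun _ => inferInstanceAs (MeasurableSpace (Fin g))) x)
      (fun x => Sum.rec (motive := fun x => Ω → Sum.elim (fun _ => ℝ) (fun _ => Fin g) x)
        (fun p => u p.1 p.2) (fun j => σ j) x))
    (humeas : ∀ i j, Measurable (u i j)) (hσmeas : ∀ j, Measurable (σ j))
    (i : Fin n) (q : Fin g) (s : Finset (Fin m)) (j0 : Fin m) (hj0 : j0 ∉ s) :
    IndepFun (fun ω => u i j0 ω * (if σ j0 ω = q then 1 else 0))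
      (fun ω => ∑ j ∈ s, u i j ω * (if σ j ω = q then 1 else 0)) ℙ := by
  classical
  letI M : ∀ x : (Fin n × Fin m) ⊕ Fin m,
      MeasurableSpace (Sum.elim (fun _ => ℝ) (fun _ => Fin g) x) :=
    fun x => Sum.rec (motive := fun x => MeasurableSpace (Sum.elim (fun _ => ℝ) (fun _ => Fin g) x))
      (fun _ => Real.measurableSpace) (fun _ => inferInstanceAs (MeasurableSpace (Fin g))) x
  set S : Finset ((Fin n × Fin m) ⊕ Fin m) := {Sum.inl (i, j0), Sum.inr j0} with hS
  set T : Finset ((Fin n × Fin m) ⊕ Fin m) :=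
    s.image (fun j => Sum.inl (i, j)) ∪ s.image Sum.inr with hT
  have hdisj : Disjoint S T := by
    rw [Finset.disjoint_left]
    intro x hxS hxT
    simp only [hS, Finset.mem_insert, Finset.mem_singleton] at hxS
    simp only [hT, Finset.mem_union, Finset.mem_image] at hxT
    rcases hxS with h | h <;> subst h
    · rcases hxT with ⟨j, hj, hj'⟩ | ⟨j, hj, hj'⟩
      · cases hj'
        · exact hj0 hj
      · cases hj'
    · rcases hxT with ⟨j, hj, hj'⟩ | ⟨j, hj, hj'⟩
      · cases hj'
      · cases hj'
        · exact hj0 hj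
  have hbase := hindep.indepFun_finset S T hdisj (by
    rintro (⟨a, b⟩ | j)
    · exact humeas a b
    · exact hσmeas j)
  have hmem1 : (Sum.inl (i, j0) : (Fin n × Fin m) ⊕ Fin m) ∈ S := by
    simp [hS]
  have hmem2 : (Sum.inr j0 : (Fin n × Fin m) ⊕ Fin m) ∈ S := by
    simp [hS]
  have hmemT1 : ∀ j ∈ s, (Sum.inl (i, j) : (Fin n × Fin m) ⊕ Fin m) ∈ T := fun j hj => by
    rw [hT, Finset.mem_union]
    exact Or.inl (Finset.mem_image.2 ⟨j, hj, rfl⟩)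
  have hmemT2 : ∀ j ∈ s, (Sum.inr j : (Fin n × Fin m) ⊕ Fin m) ∈ T := fun j hj => by
    rw [hT, Finset.mem_union]
    exact Or.inr (Finset.mem_image.2 ⟨j, hj, rfl⟩)
  have hφSmeas : Measurable (fun v : (∀ x : ↥S, Sum.elim (fun _ => ℝ) (fun _ => Fin g) x.1) =>
      @HMul.hMul ℝ ℝ ℝ _ (v ⟨Sum.inl (i, j0), hmem1⟩)
        ((fun a : Fin g => if a = q then (1:ℝ) else 0) (v ⟨Sum.inr j0, hmem2⟩))) := by
    apply Measurable.mul
    · exact measurable_pi_apply _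
    · exact (Measurable.of_discrete (f := fun a : Fin g => if a = q then (1:ℝ) else 0)).comp
        (measurable_pi_apply _)
  have hφTmeas : Measurable (fun v : (∀ x : ↥T, Sum.elim (fun _ => ℝ) (fun _ => Fin g) x.1) =>
      ∑ j ∈ s.attach,
        @HMul.hMul ℝ ℝ ℝ _ (v ⟨Sum.inl (i, j.1), hmemT1 j.1 j.2⟩)
          ((fun a : Fin g => if a = q then (1:ℝ) else 0) (v ⟨Sum.inr j.1, hmemT2 j.1 j.2⟩))) := by
    apply Finset.measurable_sum
    intro j _
    apply Measurable.mul
    · exact measurable_pi_apply _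
    · exact (Measurable.of_discrete (f := fun a : Fin g => if a = q then (1:ℝ) else 0)).comp
        (measurable_pi_apply _)
  have hcomp := hbase.comp hφSmeas hφTmeas
  have e2 : ∀ ω : Ω, (∑ j ∈ s.attach, u i j.1 ω * (if σ j.1 ω = q then (1:ℝ) else 0))
      = ∑ j ∈ s, u i j ω * (if σ j ω = q then 1 else 0) := fun ω =>
    Finset.sum_attach s (fun j => u i j ω * (if σ j ω = q then (1:ℝ) else 0))
  refine IndepFun.congr hcomp (Filter.EventuallyEq.rfl) (Filter.Eventually.of_forall (fun ω => ?_))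
  exact e2 ω

lemma my_int_exp {Ω : Type*} [MeasureSpace Ω] [IsProbabilityMeasure (ℙ : Measure Ω)]
    (Y : Ω → ℝ) (hY : Measurable Y) (C : ℝ) (hC : ∀ ω, |Y ω| ≤ C) (t : ℝ) :
    Integrable (fun ω => Real.exp (t * Y ω)) ℙ := by
  refine Integrable.mono' (integrable_const (Real.exp (|t| * C)))
    (hY.const_mul t).exp.aestronglyMeasurable (ae_of_all _ (fun ω => ?_))
  rw [Real.norm_eq_abs, abs_of_pos (Real.exp_pos _)]
  apply Real.exp_le_exp.2
  calc t * Y ω ≤ |t * Y ω| := le_abs_self _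
  _ = |t| * |Y ω| := abs_mul _ _
  _ ≤ |t| * C := mul_le_mul_of_nonneg_left (hC ω) (abs_nonneg t)

lemma my_integral_X {Ω : Type*} [MeasureSpace Ω] [IsProbabilityMeasure (ℙ : Measure Ω)]
    {g : ℕ} (U : Ω → ℝ) (hU : Measurable U)
    (V : Ω → Fin g) (hV : Measurable V) (q : Fin g)
    (hunif : (ℙ : Measure Ω) {ω | V ω = q} = (g : ℝ≥0∞)⁻¹)
    (hind : IndepFun U V ℙ) :
    ∫ ω, U ω * (if V ω = q then 1 else 0) = (∫ ω, U ω) / g := by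
  have hI : IndepFun U (fun ω => if V ω = q then (1:ℝ) else 0) ℙ :=
    hind.comp measurable_id (Measurable.of_discrete (f := fun a : Fin g => if a = q then (1:ℝ) else 0))
  have hImeas : Measurable (fun ω => if V ω = q then (1:ℝ) else 0) :=
    (Measurable.of_discrete (f := fun a : Fin g => if a = q then (1:ℝ) else 0)).comp hV
  have hmul := IndepFun.integral_mul_eq_mul_integral hI hU.aestronglyMeasurable hImeas.aestronglyMeasurable
  have hIint : ∫ ω, (if V ω = q then (1:ℝ) else 0) = (g : ℝ)⁻¹ := by
    have hs : MeasurableSet {ω | V ω = q} := hV (measurableSet_singleton q)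
    have : (fun ω => if V ω = q then (1:ℝ) else 0)
        = Set.indicator {ω | V ω = q} (fun _ => (1:ℝ)) := by
      funext ω; rw [Set.indicator_apply]; rfl
    rw [this, integral_indicator_const _ hs, measureReal_def, hunif]
    simp [ENNReal.toReal_inv]
  calc ∫ ω, U ω * (if V ω = q then 1 else 0)
      = ∫ ω, (U * fun ω => if V ω = q then (1:ℝ) else 0) ω := by rfl
  _ = (∫ ω, U ω) * ∫ ω, (if V ω = q then (1:ℝ) else 0) := hmul
  _ = (∫ ω, U ω) / g := by rw [hIint]; rw [div_eq_mul_inv]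

lemma my_chernoff_tails {Ω : Type*} [MeasureSpace Ω] [IsProbabilityMeasure (ℙ : Measure Ω)]
    {m : ℕ} (X : Fin m → Ω → ℝ) (hX : ∀ j, Measurable (X j))
    (h01 : ∀ j ω, X j ω ∈ Set.Icc (0:ℝ) 1)
    (hind : ∀ (s : Finset (Fin m)) (j : Fin m), j ∉ s →
      IndepFun (X j) (fun ω => ∑ k ∈ s, X k ω) ℙ)
    {δ : ℝ} (hδ0 : 0 < δ) (hδ1 : δ < 1) :
    ((ℙ : Measure Ω) {ω | (fun ω' => ∑ j, X j ω') ω ≤ (1-δ) * (∑ j, ∫ ω', X j ω')}).toReal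
      + ((ℙ : Measure Ω) {ω | (1+δ) * (∑ j, ∫ ω', X j ω') ≤ (fun ω' => ∑ j, X j ω') ω}).toReal
      ≤ 2 * Real.exp (-(δ^2 * (∑ j, ∫ ω', X j ω')) / 3) := by
  set M : ℝ := ∑ j, ∫ ω', X j ω' with hM
  have hM0 : 0 ≤ M := Finset.sum_nonneg (fun j _ =>
    integral_nonneg (fun ω => (h01 j ω).1))
  have hTmeas : Measurable (fun ω' => ∑ j, X j ω') :=
    Finset.measurable_sum _ (fun j _ => hX j)
  have hTbd : ∀ ω, |∑ j, X j ω| ≤ (m : ℝ) := fun ω => by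
    rw [abs_of_nonneg (Finset.sum_nonneg (fun j _ => (h01 j ω).1))]
    calc ∑ j, X j ω ≤ ∑ _j : Fin m, (1:ℝ) :=
      Finset.sum_le_sum (fun j _ => (h01 j ω).2)
    _ = m := by simp
  -- upper tail
  have hB : ((ℙ : Measure Ω) {ω | (1+δ) * M ≤ (fun ω' => ∑ j, X j ω') ω}).toReal
      ≤ Real.exp (-(δ^2 * M) / 3) := by
    have ht : (0:ℝ) ≤ Real.log (1+δ) := Real.log_nonneg (by linarith)
    have hint := my_int_exp _ hTmeas m hTbd (Real.log (1+δ))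
    have h := measure_ge_le_exp_mul_mgf (μ := (ℙ : Measure Ω))
      (X := fun ω' => ∑ j, X j ω') ((1+δ) * M) ht hint
    have hmgf := my_mgf_sum_le X hX h01 hind (Real.log (1+δ)) Finset.univ
    rw [Real.exp_log (by linarith : (0:ℝ) < 1+δ)] at hmgf
    calc ((ℙ : Measure Ω) {ω | (1+δ) * M ≤ (fun ω' => ∑ j, X j ω') ω}).toReal
        ≤ Real.exp (-Real.log (1+δ) * ((1+δ) * M)) * mgf (fun ω' => ∑ j, X j ω') ℙ (Real.log (1+δ)) := h
    _ ≤ Real.exp (-Real.log (1+δ) * ((1+δ) * M)) * Real.exp ((1+δ-1) * M) := by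
        refine mul_le_mul_of_nonneg_left ?_ (Real.exp_pos _).le
        exact hmgf
    _ = Real.exp (-(((1+δ) * Real.log (1+δ) - δ) * M)) := by
        rw [← Real.exp_add]; ring_nf
    _ ≤ Real.exp (-(δ^2 * M) / 3) := by
        apply Real.exp_le_exp.2
        have := my_ineqA hδ0.le hδ1.le
        nlinarith [hM0]
  -- lower tail
  have hA : ((ℙ : Measure Ω) {ω | (fun ω' => ∑ j, X j ω') ω ≤ (1-δ) * M}).toReal
      ≤ Real.exp (-(δ^2 * M) / 3) := by
    have ht : Real.log (1-δ) ≤ 0 := Real.log_nonpos (by linarith) (by linarith)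
    have hint := my_int_exp _ hTmeas m hTbd (Real.log (1-δ))
    have h := measure_le_le_exp_mul_mgf (μ := (ℙ : Measure Ω))
      (X := fun ω' => ∑ j, X j ω') ((1-δ) * M) ht hint
    have hmgf := my_mgf_sum_le X hX h01 hind (Real.log (1-δ)) Finset.univ
    rw [Real.exp_log (by linarith : (0:ℝ) < 1-δ)] at hmgf
    calc ((ℙ : Measure Ω) {ω | (fun ω' => ∑ j, X j ω') ω ≤ (1-δ) * M}).toReal
        ≤ Real.exp (-Real.log (1-δ) * ((1-δ) * M)) * mgf (fun ω' => ∑ j, X j ω') ℙ (Real.log (1-δ)) := h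
    _ ≤ Real.exp (-Real.log (1-δ) * ((1-δ) * M)) * Real.exp ((1-δ-1) * M) := by
        refine mul_le_mul_of_nonneg_left ?_ (Real.exp_pos _).le
        exact hmgf
    _ = Real.exp (-(((1-δ) * Real.log (1-δ) + δ) * M)) := by
        rw [← Real.exp_add]; ring_nf
    _ ≤ Real.exp (-(δ^2 * M) / 3) := by
        apply Real.exp_le_exp.2
        have := my_ineqB hδ0.le hδ1
        nlinarith [hM0]
  linarith

theorem random_assignment_approx_envy_free
    {Ω : Type*} [MeasureSpace Ω] [IsProbabilityMeasure (ℙ : Measure Ω)]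
    {g m n : ℕ} (hg : 2 ≤ g) (hm : 1 ≤ m) (hn : 1 ≤ n)
    {μmin : ℝ} (hμmin : 0 < μmin)
    (grp : Fin n → Fin g)
    (u : Fin n → Fin m → Ω → ℝ) (humeas : ∀ i j, Measurable (u i j))
    (h01 : ∀ i j ω, u i j ω ∈ Set.Icc (0 : ℝ) 1)
    (hmean : ∀ i j, μmin ≤ ∫ ω, u i j ω)
    (σ : Fin m → Ω → Fin g) (hσmeas : ∀ j, Measurable (σ j))
    (hunif : ∀ (j : Fin m) (q : Fin g), (ℙ : Measure Ω) {ω | σ j ω = q} = (g : ℝ≥0∞)⁻¹)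
    (hindep : iIndepFun
      (m := fun x : (Fin n × Fin m) ⊕ Fin m =>
        Sum.rec (motive := fun x => MeasurableSpace (Sum.elim (fun _ => ℝ) (fun _ => Fin g) x))
          (fun _ => Real.measurableSpace) (fun _ => inferInstanceAs (MeasurableSpace (Fin g))) x)
      (fun x => Sum.rec (motive := fun x => Ω → Sum.elim (fun _ => ℝ) (fun _ => Fin g) x)
        (fun p => u p.1 p.2) (fun j => σ j) x))
    {α δ : ℝ} (hα : α ∈ Set.Ico (0 : ℝ) 1) (hδ : δ = (1 - α) / (1 + α)) :
    ((ℙ : Measure Ω) {ω | ¬ ∀ (i : Fin n) (p : Fin g),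
        α * ∑ j ∈ Finset.univ.filter (fun j => σ j ω = p), u i j ω
          ≤ ∑ j ∈ Finset.univ.filter (fun j => σ j ω = grp i), u i j ω}).toReal
      ≤ 2 * n * g * Real.exp (-(δ ^ 2 * m * μmin) / (3 * g)) := by
  classical
  by_cases hα0 : α = 0
  · subst hα0
    have hempty : {ω : Ω | ¬ ∀ (i : Fin n) (p : Fin g),
        (0:ℝ) * ∑ j ∈ Finset.univ.filter (fun j => σ j ω = p), u i j ω
          ≤ ∑ j ∈ Finset.univ.filter (fun j => σ j ω = grp i), u i j ω} = ∅ := by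
      refine Set.eq_empty_iff_forall_notMem.2 (fun ω h => h (fun i p => ?_))
      rw [zero_mul]
      exact Finset.sum_nonneg (fun j _ => (h01 i j ω).1)
    rw [hempty]
    simp only [measure_empty, ENNReal.toReal_zero]
    positivity
  · have hαpos : 0 < α := lt_of_le_of_ne hα.1 (Ne.symm hα0)
    have hα1 : α < 1 := hα.2
    have hδ0 : 0 < δ := by
      rw [hδ]; apply div_pos <;> linarith
    have hδ1 : δ < 1 := by
      rw [hδ, div_lt_one (by linarith : (0:ℝ) < 1 + α)]; linarith
    have halg : α * (1 + δ) = 1 - δ := by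
      rw [hδ]; field_simp; ring
    have gpos : (0:ℝ) < g := by
      have : (2:ℝ) ≤ g := by exact_mod_cast hg
      linarith
    -- the indicator-weighted variables
    set X : Fin n → Fin g → Fin m → Ω → ℝ :=
      fun i q j ω => u i j ω * (if σ j ω = q then 1 else 0) with hXdef
    have hXmeas : ∀ i q j, Measurable (X i q j) := fun i q j =>
      (humeas i j).mul
        ((Measurable.of_discrete (f := fun a : Fin g => if a = q then (1:ℝ) else 0)).comp
          (hσmeas j))
    have hX01 : ∀ i q j ω, X i q j ω ∈ Set.Icc (0:ℝ) 1 := by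
      intro i q j ω
      by_cases h : σ j ω = q
      · simpa [hXdef, h] using h01 i j ω
      · simp [hXdef, h]
    have hXind : ∀ (i : Fin n) (q : Fin g) (s : Finset (Fin m)) (j0 : Fin m), j0 ∉ s →
        IndepFun (X i q j0) (fun ω => ∑ k ∈ s, X i q k ω) ℙ := fun i q s j0 hj0 =>
      my_indep_one_rest u σ hindep humeas hσmeas i q s j0 hj0
    -- expectations
    have hMeq : ∀ (i : Fin n) (q : Fin g),
        (∑ j, ∫ ω', X i q j ω') = (∑ j, ∫ ω', u i j ω') / g := by
      intro i q
      rw [Finset.sum_div]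
      refine Finset.sum_congr rfl (fun j _ => ?_)
      exact my_integral_X (u i j) (humeas i j) (σ j) (hσmeas j) q (hunif j q)
        (hindep.indepFun (by simp : (Sum.inl (i, j) : (Fin n × Fin m) ⊕ Fin m) ≠ Sum.inr j))
    have hMlb : ∀ i : Fin n, (m : ℝ) * μmin / g ≤ (∑ j, ∫ ω', u i j ω') / g := by
      intro i
      gcongr
      calc (m : ℝ) * μmin = ∑ _j : Fin m, μmin := by simp [mul_comm]
      _ ≤ ∑ j, ∫ ω', u i j ω' := Finset.sum_le_sum (fun j _ => hmean i j)
    -- bad-event sets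
    set A : Fin n → Fin g → Set Ω := fun i q =>
      {ω | (fun ω' => ∑ j, X i q j ω') ω ≤ (1-δ) * (∑ j, ∫ ω', X i q j ω')} with hAdef
    set B : Fin n → Fin g → Set Ω := fun i q =>
      {ω | (1+δ) * (∑ j, ∫ ω', X i q j ω') ≤ (fun ω' => ∑ j, X i q j ω') ω} with hBdef
    have hfilter : ∀ (i : Fin n) (q : Fin g) (ω : Ω),
        (∑ j ∈ Finset.univ.filter (fun j => σ j ω = q), u i j ω) = ∑ j, X i q j ω := by
      intro i q ω
      rw [Finset.sum_filter]
      refine Finset.sum_congr rfl (fun j _ => ?_)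
      by_cases h : σ j ω = q <;> simp [hXdef, h]
    -- inclusion
    have hsub : {ω : Ω | ¬ ∀ (i : Fin n) (p : Fin g),
        α * ∑ j ∈ Finset.univ.filter (fun j => σ j ω = p), u i j ω
          ≤ ∑ j ∈ Finset.univ.filter (fun j => σ j ω = grp i), u i j ω}
        ⊆ ⋃ i : Fin n, ⋃ q : Fin g, (A i q ∪ B i q) := by
      intro ω hω
      by_contra hc
      simp only [Set.mem_iUnion, not_exists] at hc
      apply hω
      intro i p
      have hAc : ∀ q : Fin g, ¬ (ω ∈ A i q) ∧ ¬ (ω ∈ B i q) := by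
        intro q
        have := hc i q
        rw [Set.mem_union] at this
        tauto
      have h1 : (1-δ) * ((∑ j, ∫ ω', u i j ω') / g) < ∑ j, X i (grp i) j ω := by
        have := (hAc (grp i)).1
        rw [hAdef] at this
        simp only [Set.mem_setOf_eq, not_le] at this
        rwa [hMeq i (grp i)] at this
      have h2 : (∑ j, X i p j ω) < (1+δ) * ((∑ j, ∫ ω', u i j ω') / g) := by
        have := (hAc p).2
        rw [hBdef] at this
        simp only [Set.mem_setOf_eq, not_le] at this
        rwa [hMeq i p] at this
      rw [hfilter i p ω, hfilter i (grp i) ω]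
      calc α * (∑ j, X i p j ω) ≤ α * ((1+δ) * ((∑ j, ∫ ω', u i j ω') / g)) :=
        mul_le_mul_of_nonneg_left h2.le hα.1
      _ = (1-δ) * ((∑ j, ∫ ω', u i j ω') / g) := by rw [← mul_assoc, halg]
      _ ≤ ∑ j, X i (grp i) j ω := h1.le
    -- measure bound
    set E : ℝ := Real.exp (-(δ ^ 2 * m * μmin) / (3 * g)) with hEdef
    have hperpair : ∀ (i : Fin n) (q : Fin g),
        ((ℙ : Measure Ω) (A i q)).toReal + ((ℙ : Measure Ω) (B i q)).toReal ≤ 2 * E := by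
      intro i q
      have htail := my_chernoff_tails (X i q) (hXmeas i q) (hX01 i q) (hXind i q) hδ0 hδ1
      refine htail.trans ?_
      have hE : Real.exp (-(δ^2 * (∑ j, ∫ ω', X i q j ω')) / 3) ≤ E := by
        rw [hEdef]
        apply Real.exp_le_exp.2
        have hMl : (m : ℝ) * μmin / g ≤ ∑ j, ∫ ω', X i q j ω' := by
          rw [hMeq i q]; exact hMlb i
        have key : δ^2 * ((m:ℝ) * μmin / g) ≤ δ^2 * (∑ j, ∫ ω', X i q j ω') :=
          mul_le_mul_of_nonneg_left hMl (sq_nonneg δ)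
        have h3 : -(δ^2 * ((m:ℝ) * μmin / g)) / 3 = -(δ^2 * m * μmin) / (3 * g) := by
          field_simp
        linarith
      linarith
    have hfin : (∑ i : Fin n, ∑ q : Fin g,
        ((ℙ : Measure Ω) (A i q) + (ℙ : Measure Ω) (B i q))) ≠ ⊤ := by
      refine (ENNReal.sum_lt_top.2 (fun i _ => ENNReal.sum_lt_top.2 (fun q _ => ?_))).ne
      exact ENNReal.add_lt_top.2 ⟨measure_lt_top _ _, measure_lt_top _ _⟩
    have hle : (ℙ : Measure Ω) {ω : Ω | ¬ ∀ (i : Fin n) (p : Fin g),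
        α * ∑ j ∈ Finset.univ.filter (fun j => σ j ω = p), u i j ω
          ≤ ∑ j ∈ Finset.univ.filter (fun j => σ j ω = grp i), u i j ω}
        ≤ ∑ i : Fin n, ∑ q : Fin g, ((ℙ : Measure Ω) (A i q) + (ℙ : Measure Ω) (B i q)) := by
      refine (measure_mono hsub).trans ?_
      refine (measure_iUnion_le _).trans ?_
      rw [tsum_fintype]
      refine Finset.sum_le_sum (fun i _ => ?_)
      refine (measure_iUnion_le _).trans ?_
      rw [tsum_fintype]
      refine Finset.sum_le_sum (fun q _ => ?_)
      exact measure_union_le _ _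
    calc ((ℙ : Measure Ω) {ω : Ω | ¬ ∀ (i : Fin n) (p : Fin g),
        α * ∑ j ∈ Finset.univ.filter (fun j => σ j ω = p), u i j ω
          ≤ ∑ j ∈ Finset.univ.filter (fun j => σ j ω = grp i), u i j ω}).toReal
        ≤ (∑ i : Fin n, ∑ q : Fin g,
            ((ℙ : Measure Ω) (A i q) + (ℙ : Measure Ω) (B i q))).toReal :=
          ENNReal.toReal_mono hfin hle
    _ = ∑ i : Fin n, ∑ q : Fin g,
          (((ℙ : Measure Ω) (A i q)).toReal + ((ℙ : Measure Ω) (B i q)).toReal) := by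
        rw [ENNReal.toReal_sum (fun i _ => ?_)]
        · refine Finset.sum_congr rfl (fun i _ => ?_)
          rw [ENNReal.toReal_sum (fun q _ => ?_)]
          · refine Finset.sum_congr rfl (fun q _ => ?_)
            rw [ENNReal.toReal_add (measure_ne_top _ _) (measure_ne_top _ _)]
          · exact (ENNReal.add_lt_top.2 ⟨measure_lt_top _ _, measure_lt_top _ _⟩).ne
        · refine (ENNReal.sum_lt_top.2 (fun q _ => ?_)).ne
          exact ENNReal.add_lt_top.2 ⟨measure_lt_top _ _, measure_lt_top _ _⟩
    _ ≤ ∑ _i : Fin n, ∑ _q : Fin g, (2 * E) :=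
        Finset.sum_le_sum (fun i _ => Finset.sum_le_sum (fun q _ => hperpair i q))
    _ = 2 * n * g * E := by
        simp only [Finset.sum_const, Finset.card_univ, Fintype.card_fin, nsmul_eq_mul]
        ring
end

section
/- Let X₁, ..., X_g be i.i.d. random variables each distributed as the sum of n' i.i.d. [0,1]-valued variables with mean μ, variance σ² ≥ σ_min² > 0, and third central moment at most 1. Then for sufficiently large n' (depending only on σ_min), E[max{X₁,...,X_g}] ≥ μn' + σ_min·√(n')/50. -/
open MeasureTheory ProbabilityTheory

lemma emlb_integrable {Ω : Type} [MeasureSpace Ω] [IsProbabilityMeasure (ℙ : Measure Ω)]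
    {f : Ω → ℝ} {C : ℝ} (hm : Measurable f) (hb : ∀ ω, |f ω| ≤ C) :
    Integrable f := by
  refine (integrable_const C).mono' hm.aestronglyMeasurable ?_
  exact Filter.Eventually.of_forall fun ω => by simpa [Real.norm_eq_abs] using hb ω

lemma emlb_indep_sum {Ω : Type} [MeasureSpace Ω] [IsProbabilityMeasure (ℙ : Measure Ω)]
    {g n : ℕ} (u : Fin g → Fin n → Ω → ℝ)
    (hmeas : ∀ k t, Measurable (u k t))
    (hindep : iIndepFun (fun p : Fin g × Fin n => u p.1 p.2) ℙ)
    (k0 k1 : Fin g) (hk : k0 ≠ k1)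
    (s : Finset (Fin n)) (a : Fin n) (ha : a ∉ s) :
    IndepFun (fun ω => ∑ t ∈ s, (u k0 t ω - u k1 t ω)) (fun ω => u k0 a ω - u k1 a ω) ℙ := by
  classical
  set S : Finset (Fin g × Fin n) := s.image (fun t => (k0, t)) ∪ s.image (fun t => (k1, t))
    with hS
  set T : Finset (Fin g × Fin n) := {(k0, a), (k1, a)} with hT
  have hdisj : Disjoint S T := by
    rw [Finset.disjoint_left]
    intro p hp hpT
    have h2 : p.2 ∈ s := by
      rw [hS, Finset.mem_union] at hp
      rcases hp with hp | hp <;>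
        · rw [Finset.mem_image] at hp
          obtain ⟨t, ht, rfl⟩ := hp
          exact ht
    have h3 : p.2 = a := by
      rw [hT] at hpT
      simp only [Finset.mem_insert, Finset.mem_singleton] at hpT
      rcases hpT with rfl | rfl <;> rfl
    exact ha (h3 ▸ h2)
  have h1 := hindep.indepFun_finset S T hdisj (fun p => hmeas p.1 p.2)
  let FL : ((i : S) → ℝ) → ℝ := fun y => ∑ t ∈ s.attach,
      (y ⟨(k0, t.1), Finset.mem_union_left _ (Finset.mem_image_of_mem _ t.2)⟩
        - y ⟨(k1, t.1), Finset.mem_union_right _ (Finset.mem_image_of_mem _ t.2)⟩)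
  have hFL : Measurable FL :=
    Finset.measurable_sum _ (fun t _ => (measurable_pi_apply _).sub (measurable_pi_apply _))
  let FR : ((i : T) → ℝ) → ℝ := fun y =>
    y ⟨(k0, a), by rw [hT]; simp⟩ - y ⟨(k1, a), by rw [hT]; simp⟩
  have hFR : Measurable FR := (measurable_pi_apply _).sub (measurable_pi_apply _)
  have h2 := h1.comp hFL hFR
  convert h2 using 1
  · funext ω
    show _ = FL (fun i : S => u (i : Fin g × Fin n).1 (i : Fin g × Fin n).2 ω)
    simp only [FL]
    rw [← Finset.sum_attach s (fun t => u k0 t ω - u k1 t ω)]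
  · funext ω
    rfl



lemma emlb_moments {Ω : Type} [MeasureSpace Ω] [IsProbabilityMeasure (ℙ : Measure Ω)]
    {n : ℕ} (V : Fin n → Ω → ℝ) (v : ℝ) (hv0 : 0 ≤ v)
    (hVmeas : ∀ t, Measurable (V t)) (hVbd : ∀ t ω, |V t ω| ≤ 1)
    (hVmean : ∀ t, ∫ ω, V t ω = 0) (hVvar : ∀ t, ∫ ω, V t ω ^ 2 = 2 * v)
    (hVfour : ∀ t, ∫ ω, V t ω ^ 4 ≤ 2 * v)
    (hVind : ∀ (s : Finset (Fin n)) (a : Fin n), a ∉ s →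
      IndepFun (fun ω => ∑ t ∈ s, V t ω) (V a) ℙ) :
    ∀ s : Finset (Fin n),
      (∫ ω, ∑ t ∈ s, V t ω = 0) ∧
      (∫ ω, (∑ t ∈ s, V t ω) ^ 2 = 2 * v * s.card) ∧
      (∫ ω, (∑ t ∈ s, V t ω) ^ 4 ≤ 3 * (2 * v * s.card) ^ 2 + 2 * v * s.card) := by
  intro s
  induction s using Finset.induction_on with
  | empty => exact ⟨by simp, by simp, by simp⟩
  | @insert a s ha ih =>
    obtain ⟨ihA1, ihA2, ihA4⟩ := ih
    set A : Ω → ℝ := fun ω => ∑ t ∈ s, V t ω with hA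
    set B : Ω → ℝ := fun ω => V a ω with hB
    set c : ℝ := (s.card : ℝ) with hc
    have hc0 : 0 ≤ c := by positivity
    have hAmeas : Measurable A := by
      apply Finset.measurable_sum
      exact fun t _ => hVmeas t
    have hAbd : ∀ ω, |A ω| ≤ c := by
      intro ω
      calc |A ω| ≤ ∑ t ∈ s, |V t ω| := Finset.abs_sum_le_sum_abs _ _
        _ ≤ ∑ _t ∈ s, (1 : ℝ) := Finset.sum_le_sum fun t _ => hVbd t ω
        _ = c := by simp [hc]
    have hBbd : ∀ ω, |B ω| ≤ 1 := fun ω => hVbd a ω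
    have iA : ∀ i : ℕ, Integrable (fun ω => A ω ^ i) := fun i =>
      emlb_integrable (hAmeas.pow_const i) (C := c ^ i) fun ω => by
        rw [abs_pow]; exact pow_le_pow_left₀ (abs_nonneg _) (hAbd ω) i
    have iB : ∀ j : ℕ, Integrable (fun ω => B ω ^ j) := fun j =>
      emlb_integrable ((hVmeas a).pow_const j) (C := 1) fun ω => by
        rw [abs_pow]; exact pow_le_one₀ (abs_nonneg _) (hBbd ω)
    have iAB : ∀ i j : ℕ, Integrable (fun ω => A ω ^ i * B ω ^ j) := fun i j =>
      emlb_integrable ((hAmeas.pow_const i).mul ((hVmeas a).pow_const j)) (C := c ^ i)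
        fun ω => by
          rw [abs_mul, abs_pow, abs_pow]
          calc |A ω| ^ i * |B ω| ^ j ≤ |A ω| ^ i * 1 :=
                mul_le_mul_of_nonneg_left (pow_le_one₀ (abs_nonneg _) (hBbd ω)) (by positivity)
            _ = |A ω| ^ i := mul_one _
            _ ≤ c ^ i := pow_le_pow_left₀ (abs_nonneg _) (hAbd ω) i
    have iABc : ∀ (r : ℝ) (i j : ℕ), Integrable (fun ω => r * (A ω ^ i * B ω ^ j)) :=
      fun r i j => (iAB i j).const_mul r
    have hAB : IndepFun A B ℙ := hVind s a ha
    have hprod : ∀ i j : ℕ,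
        ∫ ω, A ω ^ i * B ω ^ j = (∫ ω, A ω ^ i) * ∫ ω, B ω ^ j :=
      fun i j => (hAB.comp (measurable_id.pow_const i)
        (measurable_id.pow_const j)).integral_mul_eq_mul_integral (iA i).aestronglyMeasurable (iB j).aestronglyMeasurable
    have hBE1 : ∫ ω, B ω ^ 1 = 0 := by simpa using hVmean a
    have hAE1 : ∫ ω, A ω ^ 1 = 0 := by simpa using ihA1
    have hBE2 : ∫ ω, B ω ^ 2 = 2 * v := hVvar a
    have hBE4 : ∫ ω, B ω ^ 4 ≤ 2 * v := hVfour a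
    have hcard : ((insert a s).card : ℝ) = c + 1 := by
      rw [Finset.card_insert_of_notMem ha]; push_cast [hc]; ring
    have hsum : ∀ ω, ∑ t ∈ insert a s, V t ω = A ω + B ω := fun ω => by
      rw [Finset.sum_insert ha, hA, hB]; ring
    refine ⟨?_, ?_, ?_⟩
    · have h1 : ∫ ω, A ω = 0 := by simpa using hAE1
      have h2 : ∫ ω, B ω = 0 := by simpa using hBE1
      have e : (fun ω => ∑ t ∈ insert a s, V t ω) = fun ω => A ω + B ω :=
        funext fun ω => hsum ω
      have iA1 : Integrable A := by simpa using iA 1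
      have iB1 : Integrable B := by simpa using iB 1
      rw [e, integral_add iA1 iB1, h1, h2, add_zero]
    · have e : (fun ω => (∑ t ∈ insert a s, V t ω) ^ 2) = fun ω =>
          A ω ^ 2 + (2 * (A ω ^ 1 * B ω ^ 1) + B ω ^ 2) :=
        funext fun ω => by rw [hsum ω]; ring
      have i1 : Integrable (fun ω => 2 * (A ω ^ 1 * B ω ^ 1) + B ω ^ 2) :=
        (iABc 2 1 1).add (iB 2)
      rw [e, integral_add (iA 2) i1, integral_add (iABc 2 1 1) (iB 2),
        integral_const_mul, hprod 1 1, ihA2, hBE2, hAE1, hBE1, hcard]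
      ring
    · have e : (fun ω => (∑ t ∈ insert a s, V t ω) ^ 4) = fun ω =>
          A ω ^ 4 + (4 * (A ω ^ 3 * B ω ^ 1) + (6 * (A ω ^ 2 * B ω ^ 2) +
            (4 * (A ω ^ 1 * B ω ^ 3) + B ω ^ 4))) :=
        funext fun ω => by rw [hsum ω]; ring
      have i3 : Integrable (fun ω => 4 * (A ω ^ 1 * B ω ^ 3) + B ω ^ 4) :=
        (iABc 4 1 3).add (iB 4)
      have i2 : Integrable (fun ω => 6 * (A ω ^ 2 * B ω ^ 2) +
          (4 * (A ω ^ 1 * B ω ^ 3) + B ω ^ 4)) := (iABc 6 2 2).add i3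
      have i1 : Integrable (fun ω => 4 * (A ω ^ 3 * B ω ^ 1) + (6 * (A ω ^ 2 * B ω ^ 2) +
          (4 * (A ω ^ 1 * B ω ^ 3) + B ω ^ 4))) := (iABc 4 3 1).add i2
      rw [e, integral_add (iA 4) i1, integral_add (iABc 4 3 1) i2,
        integral_add (iABc 6 2 2) i3, integral_add (iABc 4 1 3) (iB 4),
        integral_const_mul, integral_const_mul, integral_const_mul,
        hprod 3 1, hprod 2 2, hprod 1 3, hBE1, hAE1, ihA2, hBE2, hcard]
      nlinarith [hv0, hc0, hBE4, sq_nonneg v, ihA4]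

lemma emlb_cs {Ω : Type} [MeasureSpace Ω] [IsProbabilityMeasure (ℙ : Measure Ω)]
    (f g : Ω → ℝ) (hf : Measurable f) (hg : Measurable g)
    (hf0 : ∀ ω, 0 ≤ f ω) (hg0 : ∀ ω, 0 ≤ g ω)
    {C : ℝ} (hfC : ∀ ω, |f ω| ≤ C) (hgC : ∀ ω, |g ω| ≤ C) :
    (∫ ω, f ω * g ω) ^ 2 ≤ (∫ ω, f ω ^ 2) * (∫ ω, g ω ^ 2) := by
  have hconj : Real.HolderConjugate 2 2 := Real.HolderConjugate.two_two
  have hfL : MemLp f (ENNReal.ofReal 2) ℙ :=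
    MemLp.of_bound hf.aestronglyMeasurable C (Filter.Eventually.of_forall fun ω => by
      simpa [Real.norm_eq_abs] using hfC ω)
  have hgL : MemLp g (ENNReal.ofReal 2) ℙ :=
    MemLp.of_bound hg.aestronglyMeasurable C (Filter.Eventually.of_forall fun ω => by
      simpa [Real.norm_eq_abs] using hgC ω)
  have h := integral_mul_le_Lp_mul_Lq_of_nonneg hconj
    (Filter.Eventually.of_forall hf0) (Filter.Eventually.of_forall hg0) hfL hgL
  have hf2 : (∫ ω, f ω ^ (2:ℝ)) = ∫ ω, f ω ^ 2 := by
    refine integral_congr_ae (Filter.Eventually.of_forall fun ω => ?_)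
    simpa using Real.rpow_natCast (f ω) 2
  have hg2 : (∫ ω, g ω ^ (2:ℝ)) = ∫ ω, g ω ^ 2 := by
    refine integral_congr_ae (Filter.Eventually.of_forall fun ω => ?_)
    simpa using Real.rpow_natCast (g ω) 2
  rw [hf2, hg2] at h
  have h1 : (∫ ω, f ω * g ω) ≤ Real.sqrt (∫ ω, f ω ^ 2) * Real.sqrt (∫ ω, g ω ^ 2) := by
    have e1 : (∫ ω, f ω ^ 2) ^ (1/(2:ℝ)) = Real.sqrt (∫ ω, f ω ^ 2) := by
      rw [Real.sqrt_eq_rpow]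
    have e2 : (∫ ω, g ω ^ 2) ^ (1/(2:ℝ)) = Real.sqrt (∫ ω, g ω ^ 2) := by
      rw [Real.sqrt_eq_rpow]
    rw [e1, e2] at h; exact h
  have hnn : 0 ≤ ∫ ω, f ω * g ω := integral_nonneg fun ω => mul_nonneg (hf0 ω) (hg0 ω)
  calc (∫ ω, f ω * g ω) ^ 2 ≤ (Real.sqrt (∫ ω, f ω ^ 2) * Real.sqrt (∫ ω, g ω ^ 2)) ^ 2 :=
        pow_le_pow_left₀ hnn h1 2
    _ = (∫ ω, f ω ^ 2) * (∫ ω, g ω ^ 2) := by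
        rw [mul_pow, Real.sq_sqrt (integral_nonneg fun ω => sq_nonneg _),
          Real.sq_sqrt (integral_nonneg fun ω => sq_nonneg _)]

lemma emlb_absY {Ω : Type} [MeasureSpace Ω] [IsProbabilityMeasure (ℙ : Measure Ω)]
    (Y : Ω → ℝ) (hYmeas : Measurable Y) (c : ℝ) (hc1 : 1 ≤ c) (hYbd : ∀ ω, |Y ω| ≤ c ^ 2)
    (hE2ge : 2 ≤ ∫ ω, Y ω ^ 2)
    (hY4 : ∫ ω, Y ω ^ 4 ≤ 4 * (∫ ω, Y ω ^ 2) ^ 2) :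
    ∫ ω, Y ω ^ 2 ≤ 4 * (∫ ω, |Y ω|) ^ 2 := by
  set a : Ω → ℝ := fun ω => Real.sqrt |Y ω| with ha
  have hameas : Measurable a := Real.continuous_sqrt.measurable.comp hYmeas.abs
  have ha0 : ∀ ω, 0 ≤ a ω := fun ω => Real.sqrt_nonneg _
  have hsq : ∀ ω, a ω ^ 2 = |Y ω| := fun ω => Real.sq_sqrt (abs_nonneg _)
  have hac : ∀ ω, a ω ≤ c := fun ω => by
    rw [ha]
    calc Real.sqrt |Y ω| ≤ Real.sqrt (c ^ 2) := Real.sqrt_le_sqrt (hYbd ω)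
      _ = c := Real.sqrt_sq (by linarith)
  have hc0 : (0:ℝ) ≤ c := by linarith
  have hcc : (1:ℝ) ≤ c ^ 2 := one_le_pow₀ hc1
  have hc3 : c ≤ c ^ 3 := by
    calc c = c * 1 := (mul_one c).symm
      _ ≤ c * c ^ 2 := mul_le_mul_of_nonneg_left hcc hc0
      _ = c ^ 3 := by ring
  have hc4 : c ^ 2 ≤ c ^ 4 := by
    calc c ^ 2 = c ^ 2 * 1 := (mul_one _).symm
      _ ≤ c ^ 2 * c ^ 2 := mul_le_mul_of_nonneg_left hcc (by positivity)
      _ = c ^ 4 := by ring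
  -- CS1
  have CS1 := emlb_cs a (fun ω => a ω ^ 3) hameas (hameas.pow_const 3) ha0
    (fun ω => by positivity) (C := c ^ 3)
    (fun ω => by
      rw [abs_of_nonneg (ha0 ω)]
      calc a ω ≤ c := hac ω
        _ ≤ c ^ 3 := hc3)
    (fun ω => by
      rw [abs_of_nonneg (by positivity)]
      exact pow_le_pow_left₀ (ha0 ω) (hac ω) 3)
  have CS2 := emlb_cs (fun ω => a ω ^ 2) (fun ω => a ω ^ 4) (hameas.pow_const 2)
    (hameas.pow_const 4) (fun ω => by positivity) (fun ω => by positivity) (C := c ^ 4)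
    (fun ω => by
      rw [abs_of_nonneg (by positivity)]
      calc a ω ^ 2 ≤ c ^ 2 := pow_le_pow_left₀ (ha0 ω) (hac ω) 2
        _ ≤ c ^ 4 := hc4)
    (fun ω => by
      rw [abs_of_nonneg (by positivity)]
      exact pow_le_pow_left₀ (ha0 ω) (hac ω) 4)
  -- convert integrands
  have e13 : (fun ω => a ω * a ω ^ 3) = fun ω => Y ω ^ 2 := funext fun ω => by
    have h2 := hsq ω
    calc a ω * a ω ^ 3 = (a ω ^ 2) ^ 2 := by ring
      _ = |Y ω| ^ 2 := by rw [h2]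
      _ = Y ω ^ 2 := sq_abs _
  have e2 : (fun ω => a ω ^ 2) = fun ω => |Y ω| := funext fun ω => hsq ω
  have e6 : (fun ω => (a ω ^ 3) ^ 2) = fun ω => |Y ω| ^ 3 := funext fun ω => by
    have h2 := hsq ω
    calc (a ω ^ 3) ^ 2 = (a ω ^ 2) ^ 3 := by ring
      _ = |Y ω| ^ 3 := by rw [h2]
  have e24 : (fun ω => a ω ^ 2 * a ω ^ 4) = fun ω => |Y ω| ^ 3 := funext fun ω => by
    have h2 := hsq ω
    calc a ω ^ 2 * a ω ^ 4 = (a ω ^ 2) ^ 3 := by ring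
      _ = |Y ω| ^ 3 := by rw [h2]
  have e4 : (fun ω => (a ω ^ 2) ^ 2) = fun ω => Y ω ^ 2 := funext fun ω => by
    rw [hsq ω, sq_abs]
  have e8 : (fun ω => (a ω ^ 4) ^ 2) = fun ω => Y ω ^ 4 := funext fun ω => by
    have h2 := hsq ω
    calc (a ω ^ 4) ^ 2 = ((a ω ^ 2) ^ 2) ^ 2 := by ring
      _ = (|Y ω| ^ 2) ^ 2 := by rw [h2]
      _ = Y ω ^ 4 := by rw [sq_abs]; ring
  rw [e13, e2, e6] at CS1
  rw [e24, e4, e8] at CS2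
  set E1 : ℝ := ∫ ω, |Y ω| with hE1
  set E2 : ℝ := ∫ ω, Y ω ^ 2 with hE2
  set E3 : ℝ := ∫ ω, |Y ω| ^ 3 with hE3
  set E4 : ℝ := ∫ ω, Y ω ^ 4 with hE4
  have hE1nn : 0 ≤ E1 := integral_nonneg fun ω => abs_nonneg _
  have hE3nn : 0 ≤ E3 := integral_nonneg fun ω => by positivity
  have hE2pos : (0:ℝ) < E2 := by linarith
  -- CS1 : E2^2 ≤ E1 * E3 ; CS2 : E3^2 ≤ E2 * E4 ; hY4 : E4 ≤ 4 E2^2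
  have h1 : E2 ^ 4 ≤ (E1 * E3) ^ 2 := by
    calc E2 ^ 4 = (E2 ^ 2) ^ 2 := by ring
      _ ≤ (E1 * E3) ^ 2 := pow_le_pow_left₀ (sq_nonneg _) CS1 2
  have h2 : E3 ^ 2 ≤ 4 * E2 ^ 3 := by nlinarith
  have h3 : E2 ^ 4 ≤ (4 * E1 ^ 2) * E2 ^ 3 := by nlinarith
  have h4 : E2 * E2 ^ 3 ≤ (4 * E1 ^ 2) * E2 ^ 3 := by
    calc E2 * E2 ^ 3 = E2 ^ 4 := by ring
      _ ≤ (4 * E1 ^ 2) * E2 ^ 3 := h3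
  exact le_of_mul_le_mul_right h4 (by positivity)

set_option maxHeartbeats 1000000 in
theorem expected_max_of_iid_sums_lower_bound :
    ∀ σmin : ℝ, 0 < σmin → ∃ N : ℕ, ∀ n' : ℕ, N ≤ n' → ∀ g : ℕ, ∀ hg : 2 ≤ g,
    ∀ (Ω : Type) [MeasureSpace Ω] [IsProbabilityMeasure (ℙ : Measure Ω)]
      (u : Fin g → Fin n' → Ω → ℝ) (μ v : ℝ),
      (∀ k t, Measurable (u k t)) →
      (∀ k t ω, u k t ω ∈ Set.Icc (0 : ℝ) 1) →
      iIndepFun (fun p : Fin g × Fin n' => u p.1 p.2) →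
      (∀ k t k' t', IdentDistrib (u k t) (u k' t') ℙ ℙ) →
      (∀ k t, ∫ ω, u k t ω = μ) →
      (∀ k t, ∫ ω, (u k t ω - μ) ^ 2 = v) →
      σmin ^ 2 ≤ v →
      (∀ k t, ∫ ω, |u k t ω - μ| ^ 3 ≤ (1 : ℝ)) →
      μ * n' + σmin * Real.sqrt n' / 50
        ≤ ∫ ω, Finset.univ.sup'
            (Finset.univ_nonempty_iff.mpr (Fin.pos_iff_nonempty.mp (by omega)))
            (fun k : Fin g => ∑ t, u k t ω) := by
  intro σmin hσ
  refine ⟨⌈σmin⁻¹ ^ 2⌉₊ + 1, ?_⟩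
  intro n' hn' g hg Ω _ _ u μ v hmeas hmem hindep hident hmean hvar hvlb h3rd
  classical
  have hn1 : 1 ≤ n'
  · omega
  have hnn : (1 : ℝ) ≤ σmin ^ 2 * n'
  · have hceil : ((⌈σmin⁻¹ ^ 2⌉₊ : ℕ) : ℝ) ≤ (n' : ℝ) := Nat.cast_le.mpr (by omega)
    have h1 : (σmin⁻¹ ^ 2 : ℝ) ≤ n' := le_trans (Nat.le_ceil _) hceil
    have h2 : (0:ℝ) < σmin ^ 2 := by positivity
    rw [inv_pow] at h1
    calc (1:ℝ) = σmin ^ 2 * (σmin ^ 2)⁻¹ := by field_simp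
      _ ≤ σmin ^ 2 * n' := mul_le_mul_of_nonneg_left h1 (le_of_lt h2)
  set k0 : Fin g := ⟨0, by omega⟩ with hk0
  set k1 : Fin g := ⟨1, by omega⟩ with hk1
  have hk01 : k0 ≠ k1 := by simp [hk0, hk1, Fin.ext_iff]
  have hu0 : ∀ k t ω, 0 ≤ u k t ω := fun k t ω => (hmem k t ω).1
  have hu1 : ∀ k t ω, u k t ω ≤ 1 := fun k t ω => (hmem k t ω).2
  have hubd : ∀ k t ω, |u k t ω| ≤ 1 := fun k t ω =>
    abs_le.mpr ⟨by linarith [hu0 k t ω], hu1 k t ω⟩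
  have huint : ∀ k t, Integrable (u k t) := fun k t =>
    emlb_integrable (hmeas k t) (hubd k t)
  have hμ0 : 0 ≤ μ
  · rw [← hmean k0 ⟨0, by omega⟩]
    exact integral_nonneg fun ω => hu0 _ _ ω
  have hμ1 : μ ≤ 1
  · rw [← hmean k0 ⟨0, by omega⟩]
    calc ∫ ω, u k0 ⟨0, by omega⟩ ω ≤ ∫ _ω : Ω, (1:ℝ) :=
          integral_mono (huint _ _) (integrable_const 1) (fun ω => hu1 _ _ ω)
      _ = 1 := by simp
  have hZbd : ∀ k t ω, |u k t ω - μ| ≤ 1 := fun k t ω => by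
    rw [abs_le]; constructor <;> [linarith [hu0 k t ω]; linarith [hu1 k t ω]]
  have hv0 : 0 < v := lt_of_lt_of_le (by positivity) hvlb
  have hZmean : ∀ k t, ∫ ω, (u k t ω - μ) = 0 := fun k t => by
    rw [integral_sub (huint k t) (integrable_const μ)]
    simp [hmean k t]
  set V : Fin n' → Ω → ℝ := fun t ω => u k0 t ω - u k1 t ω with hV
  have hVmeas : ∀ t, Measurable (V t) := fun t => (hmeas k0 t).sub (hmeas k1 t)
  have hVbd : ∀ t ω, |V t ω| ≤ 1 := fun t ω => by
    simp only [hV, abs_le]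
    constructor <;> [linarith [hu0 k0 t ω, hu1 k1 t ω]; linarith [hu1 k0 t ω, hu0 k1 t ω]]
  have hVint : ∀ t, Integrable (V t) := fun t => emlb_integrable (hVmeas t) (hVbd t)
  have hVmean : ∀ t, ∫ ω, V t ω = 0 := fun t => by
    simp only [hV]
    rw [integral_sub (huint k0 t) (huint k1 t), hmean k0 t, hmean k1 t, sub_self]
  have hpair : ∀ t, IndepFun (u k0 t) (u k1 t) ℙ := fun t =>
    hindep.indepFun (show ((k0, t) : Fin g × Fin n') ≠ (k1, t) from
      fun h => hk01 (congrArg Prod.fst h))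
  have hZint2 : ∀ k t, Integrable (fun ω => (u k t ω - μ) ^ 2) := fun k t =>
    emlb_integrable ((hmeas k t).sub_const μ |>.pow_const 2) (C := 1) fun ω => by
      rw [abs_pow]; exact pow_le_one₀ (abs_nonneg _) (hZbd k t ω)
  have hcross : ∀ t, ∫ ω, (u k0 t ω - μ) * (u k1 t ω - μ) = 0
  · intro t
    have hI : IndepFun (fun ω => u k0 t ω - μ) (fun ω => u k1 t ω - μ) ℙ :=
      (hpair t).comp (measurable_id.sub_const μ) (measurable_id.sub_const μ)
    have h := hI.integral_mul_eq_mul_integral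
      (emlb_integrable ((hmeas k0 t).sub_const μ) (hZbd k0 t)).aestronglyMeasurable
      (emlb_integrable ((hmeas k1 t).sub_const μ) (hZbd k1 t)).aestronglyMeasurable
    calc ∫ ω, (u k0 t ω - μ) * (u k1 t ω - μ)
        = (∫ ω, (u k0 t ω - μ)) * ∫ ω, (u k1 t ω - μ) := h
      _ = 0 := by rw [hZmean k0 t, hZmean k1 t]; ring
  have hcrossint : ∀ t, Integrable (fun ω => (u k0 t ω - μ) * (u k1 t ω - μ)) := fun t =>
    emlb_integrable (((hmeas k0 t).sub_const μ).mul ((hmeas k1 t).sub_const μ)) (C := 1)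
      fun ω => by
        rw [abs_mul]
        exact mul_le_one₀ (hZbd k0 t ω) (abs_nonneg _) (hZbd k1 t ω)
  have hVvar : ∀ t, ∫ ω, (V t ω) ^ 2 = 2 * v
  · intro t
    have e : (fun ω => (V t ω) ^ 2) = fun ω =>
        (u k0 t ω - μ) ^ 2 + (u k1 t ω - μ) ^ 2 - 2 * ((u k0 t ω - μ) * (u k1 t ω - μ)) :=
      funext fun ω => by simp only [hV]; ring
    have hadd : Integrable (fun ω => (u k0 t ω - μ) ^ 2 + (u k1 t ω - μ) ^ 2) :=
      (hZint2 k0 t).add (hZint2 k1 t)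
    have hmul : Integrable (fun ω => 2 * ((u k0 t ω - μ) * (u k1 t ω - μ))) :=
      (hcrossint t).const_mul 2
    rw [e, integral_sub hadd hmul, integral_add (hZint2 k0 t) (hZint2 k1 t),
      integral_const_mul, hvar k0 t, hvar k1 t, hcross t]
    ring
  have hVfour : ∀ t, ∫ ω, (V t ω) ^ 4 ≤ 2 * v := fun t => by
    calc ∫ ω, (V t ω) ^ 4 ≤ ∫ ω, (V t ω) ^ 2 := by
          refine integral_mono (emlb_integrable ((hVmeas t).pow_const 4) (C := 1) ?_)
            (emlb_integrable ((hVmeas t).pow_const 2) (C := 1) ?_) ?_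
          · intro ω; rw [abs_pow]; exact pow_le_one₀ (abs_nonneg _) (hVbd t ω)
          · intro ω; rw [abs_pow]; exact pow_le_one₀ (abs_nonneg _) (hVbd t ω)
          · intro ω
            simp only
            have h1 : (V t ω) ^ 2 ≤ 1 := by
              have := hVbd t ω; nlinarith [abs_nonneg (V t ω), sq_abs (V t ω)]
            nlinarith [sq_nonneg (V t ω)]
      _ = 2 * v := hVvar t
  have hVind : ∀ (s : Finset (Fin n')) (a : Fin n'), a ∉ s →
      IndepFun (fun ω => ∑ t ∈ s, V t ω) (V a) ℙ := fun s a ha =>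
    emlb_indep_sum u hmeas hindep k0 k1 hk01 s a ha
  have hSmom := emlb_moments V v hv0.le hVmeas hVbd hVmean hVvar hVfour hVind
  set Y : Ω → ℝ := fun ω => ∑ t ∈ Finset.univ, V t ω with hYdef
  have hYmeas : Measurable Y := Finset.measurable_sum _ fun t _ => hVmeas t
  have hcardr : ((Finset.univ : Finset (Fin n')).card : ℝ) = (n' : ℝ) := by
    simp
  have hY2 : ∫ ω, Y ω ^ 2 = 2 * v * n'
  · have h := (hSmom Finset.univ).2.1
    rw [hcardr] at h
    exact h
  have hY4 : ∫ ω, Y ω ^ 4 ≤ 3 * (2 * v * n') ^ 2 + 2 * v * n'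
  · have h := (hSmom Finset.univ).2.2
    rw [hcardr] at h
    exact h
  have hnr0 : (0:ℝ) ≤ (n' : ℝ) := Nat.cast_nonneg _
  have hnr1 : (1:ℝ) ≤ (n' : ℝ) := by exact_mod_cast hn1
  have hE2ge : 2 ≤ ∫ ω, Y ω ^ 2
  · rw [hY2]; nlinarith [hnn, hvlb, hnr0]
  have hY4' : ∫ ω, Y ω ^ 4 ≤ 4 * (∫ ω, Y ω ^ 2) ^ 2
  · rw [hY2]
    have hE2 : (2:ℝ) ≤ 2 * v * n' := by nlinarith [hnn, hvlb, hnr0]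
    nlinarith [hY4]
  have hYbd : ∀ ω, |Y ω| ≤ (n' : ℝ) ^ 2
  · intro ω
    calc |Y ω| ≤ ∑ t ∈ Finset.univ, |V t ω| := Finset.abs_sum_le_sum_abs _ _
      _ ≤ ∑ _t ∈ (Finset.univ : Finset (Fin n')), (1:ℝ) :=
          Finset.sum_le_sum fun t _ => hVbd t ω
      _ = (n' : ℝ) := by simp
      _ ≤ (n' : ℝ) ^ 2 := by nlinarith [hnr1]
  have habs := emlb_absY Y hYmeas (n' : ℝ) hnr1 hYbd hE2ge hY4'
  rw [hY2] at habs
  set E1 : ℝ := ∫ ω, |Y ω| with hE1def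
  have hE1nn : 0 ≤ E1 := integral_nonneg fun ω => abs_nonneg _
  have hkey : σmin * Real.sqrt n' ≤ 2 * E1
  · have h1 : σmin ^ 2 * n' ≤ (2 * E1) ^ 2 := by nlinarith [hnn, hvlb, hnr0, habs]
    calc σmin * Real.sqrt n' = Real.sqrt (σmin ^ 2 * n') := by
          rw [Real.sqrt_mul (sq_nonneg σmin), Real.sqrt_sq hσ.le]
      _ ≤ Real.sqrt ((2 * E1) ^ 2) := Real.sqrt_le_sqrt h1
      _ = 2 * E1 := by rw [Real.sqrt_sq (by linarith)]
  -- final assembly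
  set X : Fin g → Ω → ℝ := fun k ω => ∑ t ∈ Finset.univ, u k t ω with hXdef
  have hXmeas : ∀ k, Measurable (X k) := fun k =>
    Finset.measurable_sum _ fun t _ => hmeas k t
  have hX0 : ∀ k ω, 0 ≤ X k ω := fun k ω =>
    Finset.sum_nonneg fun t _ => hu0 k t ω
  have hXub : ∀ k ω, X k ω ≤ (n' : ℝ) := fun k ω => by
    calc X k ω ≤ ∑ _t ∈ (Finset.univ : Finset (Fin n')), (1:ℝ) :=
          Finset.sum_le_sum fun t _ => hu1 k t ω
      _ = (n' : ℝ) := by simp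
  have hXbd : ∀ k ω, |X k ω| ≤ (n' : ℝ) := fun k ω =>
    abs_le.mpr ⟨by linarith [hX0 k ω], hXub k ω⟩
  have hXint : ∀ k, Integrable (X k) := fun k =>
    emlb_integrable (hXmeas k) (hXbd k)
  have hEX : ∀ k, ∫ ω, X k ω = μ * n'
  · intro k
    rw [hXdef]
    rw [integral_finset_sum Finset.univ fun t _ => huint k t]
    simp [hmean k, mul_comm]
  have hYeq : ∀ ω, Y ω = X k0 ω - X k1 ω := fun ω => by
    rw [hYdef, hXdef]
    simp only [hV]
    rw [Finset.sum_sub_distrib]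
  have hne : (Finset.univ : Finset (Fin g)).Nonempty :=
    Finset.univ_nonempty_iff.mpr (Fin.pos_iff_nonempty.mp (by omega))
  have hMmeas : Measurable (fun ω => Finset.univ.sup' hne (fun k : Fin g => X k ω)) := by
    have h := Finset.measurable_sup' hne fun (k : Fin g) (_ : k ∈ Finset.univ) => hXmeas k
    have e : (Finset.univ.sup' hne X) = fun ω => Finset.univ.sup' hne (fun k : Fin g => X k ω) :=
      funext fun ω => Finset.sup'_apply hne X ω
    rwa [e] at h
  have hMub : ∀ ω, Finset.univ.sup' hne (fun k : Fin g => X k ω) ≤ (n' : ℝ) := fun ω =>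
    Finset.sup'_le hne _ fun k _ => hXub k ω
  have hMlb : ∀ ω, X k0 ω ≤ Finset.univ.sup' hne (fun k : Fin g => X k ω) := fun ω =>
    Finset.le_sup' (fun k : Fin g => X k ω) (Finset.mem_univ k0)
  have hMlb1 : ∀ ω, X k1 ω ≤ Finset.univ.sup' hne (fun k : Fin g => X k ω) := fun ω =>
    Finset.le_sup' (fun k : Fin g => X k ω) (Finset.mem_univ k1)
  have hMint : Integrable (fun ω => Finset.univ.sup' hne (fun k : Fin g => X k ω)) :=
    emlb_integrable hMmeas (C := (n' : ℝ)) fun ω =>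
      abs_le.mpr ⟨by linarith [hMlb ω, hX0 k0 ω], hMub ω⟩
  have hlow : ∀ ω, (X k0 ω + X k1 ω) / 2 + |Y ω| / 2 ≤
      Finset.univ.sup' hne (fun k : Fin g => X k ω) := fun ω => by
    rw [hYeq ω]
    rcases abs_cases (X k0 ω - X k1 ω) with ⟨he, _⟩ | ⟨he, _⟩ <;> rw [he] <;>
      [linarith [hMlb ω]; linarith [hMlb1 ω]]
  have hlowint : Integrable (fun ω => (X k0 ω + X k1 ω) / 2 + |Y ω| / 2) :=
    emlb_integrable ((((hXmeas k0).add (hXmeas k1)).div_const 2).add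
      (hYmeas.abs.div_const 2)) (C := 2 * (n' : ℝ)) fun ω => by
        rw [abs_le]
        constructor <;>
          [(have := hX0 k0 ω; have := hX0 k1 ω; have := abs_nonneg (Y ω); nlinarith [hnr0]);
           (have := hXub k0 ω; have := hXub k1 ω; have h2 : |Y ω| ≤ (n':ℝ) := by
              rw [hYeq ω, abs_le]
              constructor <;> [linarith [hX0 k0 ω, hXub k1 ω]; linarith [hXub k0 ω, hX0 k1 ω]]
            nlinarith [hnr0])]
  have hlowval : ∫ ω, ((X k0 ω + X k1 ω) / 2 + |Y ω| / 2) = μ * n' + E1 / 2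
  · have h1 : Integrable (fun ω => (X k0 ω + X k1 ω) / 2) :=
      ((hXint k0).add (hXint k1)).div_const 2
    have h2 : Integrable (fun ω => |Y ω| / 2) :=
      (emlb_integrable hYmeas.abs (C := (n' : ℝ) ^ 2) fun ω => by
        rw [abs_abs]; exact hYbd ω).div_const 2
    rw [integral_add h1 h2, integral_div, integral_div,
      integral_add (hXint k0) (hXint k1), hEX k0, hEX k1]
    rw [hE1def]
    ring
  show μ * n' + σmin * Real.sqrt n' / 50
      ≤ ∫ ω, Finset.univ.sup' hne (fun k : Fin g => X k ω)
  calc μ * n' + σmin * Real.sqrt n' / 50 ≤ μ * n' + E1 / 2 := by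
        have h50 : σmin * Real.sqrt n' / 50 ≤ σmin * Real.sqrt n' / 4 := by
          have : 0 ≤ σmin * Real.sqrt n' := mul_nonneg hσ.le (Real.sqrt_nonneg _)
          linarith
        linarith [hkey]
    _ = ∫ ω, ((X k0 ω + X k1 ω) / 2 + |Y ω| / 2) := hlowval.symm
    _ ≤ ∫ ω, Finset.univ.sup' hne (fun k : Fin g => X k ω) :=
        integral_mono hlowint hMint hlow
end
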